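/- Let m ≥ n ≥ 1 and let D = { Z ∈ M_{m×n}(ℂ) : I_m − ZZ* is positive definite } be the Cartan domain of type I, with Bergman metric H_Z(U,Ū) = ((m+n)/2)·Trace[(I_m − ZZ*)⁻¹ U (I_n − Z*Z)⁻¹ U*]. Fix indices q ∈ {1,…,m}, r ∈ {1,…,n} and let p : D → ℂ be the coordinate projection p(Z) = Z_{qr}. Then p maps D into the open unit disk 𝔻, and its Bloch seminorm equals the Bloch constant of D: β_p = sup_{Z∈D} sup_{U≠0} |U_{qr}| / H_Z(U,Ū)^{1/2} = √(2/(m+n)). -/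

import Mathlib

open Matrix
open scoped ComplexOrder

/-- The Cartan classical domain of type I:
`{ Z ∈ M_{m×n}(ℂ) : I_m − Z Z* positive definite }`. -/
def cartanI (m n : ℕ) : Set (Matrix (Fin m) (Fin n) ℂ) :=
  {Z | ((1 : Matrix (Fin m) (Fin m) ℂ) - Z * Z.conjTranspose).PosDef}

/-- The Bergman metric of the Cartan domain of type I:
`H_Z(U,Ū) = ((m+n)/2) Tr[(I_m − ZZ*)⁻¹ U (I_n − Z*Z)⁻¹ U*]`. -/
noncomputable def cartanIMetric (m n : ℕ) (Z U : Matrix (Fin m) (Fin n) ℂ) : ℝ :=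
  ((m + n : ℝ) / 2) *
    ((((1 : Matrix (Fin m) (Fin m) ℂ) - Z * Z.conjTranspose)⁻¹ * U *
      ((1 : Matrix (Fin n) (Fin n) ℂ) - Z.conjTranspose * Z)⁻¹ *
      U.conjTranspose).trace).re

-- trace re formula
lemma aux_trace_mul_conjTranspose_re {a b : ℕ} (U : Matrix (Fin a) (Fin b) ℂ) :
    ((U * Uᴴ).trace).re = ∑ i, ∑ j, ‖U i j‖^2 := by
  simp [Matrix.trace, Matrix.diag, Matrix.mul_apply, Matrix.conjTranspose_apply,
    Complex.re_sum, Complex.mul_conj, Complex.normSq_eq_norm_sq, ← Complex.ofReal_pow, Complex.ofReal_re]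

lemma aux_single_le_double_sum {a b : ℕ} (U : Matrix (Fin a) (Fin b) ℂ) (q : Fin a) (r : Fin b) :
    ‖U q r‖^2 ≤ ∑ i, ∑ j, ‖U i j‖^2 :=
  calc ‖U q r‖^2 ≤ ∑ j, ‖U q j‖^2 :=
        Finset.single_le_sum (fun j _ => sq_nonneg ‖U q j‖) (Finset.mem_univ r)
    _ ≤ ∑ i, ∑ j, ‖U i j‖^2 :=
        Finset.single_le_sum (f := fun i => ∑ j, ‖U i j‖^2) (fun i _ => Finset.sum_nonneg fun j _ => sq_nonneg _)
          (Finset.mem_univ q)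

lemma dot_single' {k : ℕ} (M : Matrix (Fin k) (Fin k) ℂ) (i : Fin k) :
    star (Pi.single i 1) ⬝ᵥ (M *ᵥ Pi.single i (1:ℂ)) = M i i := by
  simp [dotProduct, mulVec, Pi.single_apply, Finset.sum_ite_eq]

lemma aux_coord_lt {m n : ℕ} (q : Fin m) (r : Fin n) {Z : Matrix (Fin m) (Fin n) ℂ}
    (hZ : Z ∈ cartanI m n) : ‖Z q r‖ < 1 := by
  have hne : (Pi.single q (1:ℂ) : Fin m → ℂ) ≠ 0 := by
    intro h
    have := congrFun h q
    rw [Pi.single_eq_same] at this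
    exact one_ne_zero this
  have h := (show ((1 : Matrix (Fin m) (Fin m) ℂ) - Z * Zᴴ).PosDef from hZ).dotProduct_mulVec_pos
    (x := Pi.single q 1) hne
  rw [dot_single'] at h
  have hre := (Complex.lt_def.mp h).1
  rw [Matrix.sub_apply, Matrix.one_apply_eq, Complex.sub_re, Complex.one_re,
    Complex.zero_re] at hre
  have hqq : ((Z * Zᴴ) q q).re = ∑ j, ‖Z q j‖^2 := by
    simp [Matrix.mul_apply, Matrix.conjTranspose_apply, Complex.re_sum, Complex.mul_conj,
      Complex.normSq_eq_norm_sq, ← Complex.ofReal_pow, Complex.ofReal_re]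
  rw [hqq] at hre
  have h1 : ‖Z q r‖^2 ≤ ∑ j, ‖Z q j‖^2 :=
    Finset.single_le_sum (fun j _ => sq_nonneg ‖Z q j‖) (Finset.mem_univ r)
  nlinarith [norm_nonneg (Z q r)]


lemma dot_single {k : ℕ} (M : Matrix (Fin k) (Fin k) ℂ) (i : Fin k) :
    star (Pi.single i 1) ⬝ᵥ (M *ᵥ Pi.single i (1:ℂ)) = M i i := by
  simp [dotProduct, mulVec, Pi.single_apply, Finset.sum_ite_eq]

lemma aux_trace_re_nonneg {k : ℕ} {M : Matrix (Fin k) (Fin k) ℂ} (hM : M.PosSemidef) :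
    0 ≤ M.trace.re := by
  have h : (0:ℂ) ≤ M.trace := by
    rw [Matrix.trace]
    refine Finset.sum_nonneg fun i _ => ?_
    have h2 := hM.dotProduct_mulVec_nonneg (Pi.single i 1)
    rw [dot_single] at h2
    simpa using h2
  exact (Complex.le_def.mp h).1

open scoped MatrixOrder Matrix.Norms.L2Operator in
lemma aux_trace_mul_re_nonneg {k : ℕ} {P M : Matrix (Fin k) (Fin k) ℂ}
    (hP : P.PosSemidef) (hM : M.PosSemidef) : 0 ≤ ((P * M).trace).re := by
  obtain ⟨B, rfl⟩ := CStarAlgebra.nonneg_iff_eq_star_mul_self.mp hP.nonneg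
  rw [star_eq_conjTranspose]
  rw [Matrix.mul_assoc, Matrix.trace_mul_comm]
  exact aux_trace_re_nonneg (hM.mul_mul_conjTranspose_same B)


local notation "⟪" x ", " y "⟫" => @inner ℂ _ _ x y

noncomputable def ev {c : ℕ} (v : Fin c → ℂ) : EuclideanSpace ℂ (Fin c) :=
  (WithLp.equiv 2 _).symm v

lemma ev_inner {c : ℕ} (u v : Fin c → ℂ) : ⟪ev u, ev v⟫ = star u ⬝ᵥ v :=
  by rw [dotProduct_comm]; rfl

lemma ev_norm_sq {c : ℕ} (v : Fin c → ℂ) : star v ⬝ᵥ v = ((‖ev v‖^2 : ℝ) : ℂ) := by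
  rw [← ev_inner, inner_self_eq_norm_sq_to_K]
  norm_cast

lemma ev_norm_pos {c : ℕ} {v : Fin c → ℂ} (hv : v ≠ 0) : 0 < ‖ev v‖ := by
  rw [norm_pos_iff]
  intro h
  exact hv ((WithLp.equiv 2 _).symm.injective (h.trans rfl))

lemma key_dot {a b : ℕ} (W : Matrix (Fin a) (Fin b) ℂ) (v : Fin b → ℂ) :
    star v ⬝ᵥ (((1 : Matrix (Fin b) (Fin b) ℂ) - Wᴴ * W) *ᵥ v)
      = star v ⬝ᵥ v - star (W *ᵥ v) ⬝ᵥ (W *ᵥ v) := by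
  rw [sub_mulVec, dotProduct_sub, one_mulVec, ← mulVec_mulVec, dotProduct_mulVec, ← star_mulVec]

lemma aux_swap {k l : ℕ} {Z : Matrix (Fin k) (Fin l) ℂ}
    (hZ : ((1 : Matrix (Fin k) (Fin k) ℂ) - Z * Zᴴ).PosDef) :
    ((1 : Matrix (Fin l) (Fin l) ℂ) - Zᴴ * Z).PosDef := by
  refine posDef_iff_dotProduct_mulVec.mpr ⟨?_, ?_⟩
  · exact Matrix.isHermitian_one.sub (Matrix.isHermitian_conjTranspose_mul_self Z)
  · intro x hx
    have hlt : ∀ (y : Fin k → ℂ), y ≠ 0 → ‖ev (Zᴴ *ᵥ y)‖ < ‖ev y‖ := by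
      intro y hy
      have h := hZ.dotProduct_mulVec_pos hy
      rw [show (1 : Matrix (Fin k) (Fin k) ℂ) - Z * Zᴴ
            = 1 - (Zᴴ)ᴴ * Zᴴ by rw [conjTranspose_conjTranspose]] at h
      rw [key_dot, ev_norm_sq, ev_norm_sq, ← Complex.ofReal_sub,
        Complex.zero_lt_real, sub_pos] at h
      nlinarith [norm_nonneg (ev (Zᴴ *ᵥ y)), norm_nonneg (ev y)]
    have goal : ‖ev (Z *ᵥ x)‖ < ‖ev x‖ := by
      by_cases hw : Z *ᵥ x = 0
      · rw [hw]
        have : ‖ev (0 : Fin k → ℂ)‖ = 0 := by simp [ev]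
        rw [this]
        exact ev_norm_pos hx
      · have e1 : ⟪ev x, ev (Zᴴ *ᵥ (Z *ᵥ x))⟫ = ((‖ev (Z *ᵥ x)‖^2 : ℝ) : ℂ) := by
          rw [ev_inner, dotProduct_mulVec, ← star_mulVec, ev_norm_sq]
        have h1 : ‖ev (Z *ᵥ x)‖^2 < ‖ev x‖ * ‖ev (Z *ᵥ x)‖ := by
          calc ‖ev (Z *ᵥ x)‖^2 = (⟪ev x, ev (Zᴴ *ᵥ (Z *ᵥ x))⟫).re := by rw [e1, Complex.ofReal_re]
            _ ≤ ‖⟪ev x, ev (Zᴴ *ᵥ (Z *ᵥ x))⟫‖ := Complex.re_le_norm _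
            _ ≤ ‖ev x‖ * ‖ev (Zᴴ *ᵥ (Z *ᵥ x))‖ := norm_inner_le_norm _ _
            _ < ‖ev x‖ * ‖ev (Z *ᵥ x)‖ :=
                mul_lt_mul_of_pos_left (hlt _ hw) (ev_norm_pos hx)
        have h2 := ev_norm_pos hw
        nlinarith
    rw [key_dot, ev_norm_sq, ev_norm_sq, ← Complex.ofReal_sub,
      Complex.zero_lt_real, sub_pos]
    have h0 : (0:ℝ) ≤ ‖ev (Z *ᵥ x)‖ := norm_nonneg _
    nlinarith


open scoped MatrixOrder Matrix.Norms.L2Operator in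
lemma aux_sub_sq_psd {k : ℕ} {A : Matrix (Fin k) (Fin k) ℂ} (hA : A.PosSemidef)
    (h1 : ((1 : Matrix (Fin k) (Fin k) ℂ) - A).PosSemidef) : (A - A * A).PosSemidef := by
  have h := CFC.sqrt_mul_sqrt_self A hA.nonneg
  have hs3 : CFC.sqrt A * A * CFC.sqrt A = A * A :=
    calc CFC.sqrt A * A * CFC.sqrt A = CFC.sqrt A * (CFC.sqrt A * CFC.sqrt A) * CFC.sqrt A := by rw [h]
      _ = (CFC.sqrt A * CFC.sqrt A) * (CFC.sqrt A * CFC.sqrt A) := by simp only [Matrix.mul_assoc]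
      _ = A * A := by rw [h]
  have h1' : A - A * A = CFC.sqrt A * ((1 : Matrix (Fin k) (Fin k) ℂ) - A) * (CFC.sqrt A)ᴴ := by
    rw [(CFC.sqrt_nonneg A).posSemidef.isHermitian.eq, Matrix.mul_sub, Matrix.mul_one, Matrix.sub_mul,
      h, hs3]
  rw [h1']
  exact h1.mul_mul_conjTranspose_same _

lemma aux_inv_sub_one_psd {k : ℕ} {A : Matrix (Fin k) (Fin k) ℂ}
    (hA : A.PosDef) (h1 : ((1 : Matrix (Fin k) (Fin k) ℂ) - A).PosSemidef) :
    (A⁻¹ - 1).PosSemidef := by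
  have hdet : IsUnit A.det := isUnit_iff_ne_zero.mpr hA.det_pos.ne'
  refine posSemidef_iff_dotProduct_mulVec.mpr ⟨hA.inv.isHermitian.sub Matrix.isHermitian_one, fun x => ?_⟩
  have hxy : A *ᵥ (A⁻¹ *ᵥ x) = x := by
    rw [mulVec_mulVec, Matrix.mul_nonsing_inv _ hdet, one_mulVec]
  have hsx : star x = star (A⁻¹ *ᵥ x) ᵥ* A := by
    conv_lhs => rw [← hxy]
    rw [star_mulVec, hA.isHermitian.eq]
  have e1 : star x ⬝ᵥ ((A⁻¹ - 1) *ᵥ x)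
      = star (A⁻¹ *ᵥ x) ⬝ᵥ ((A - A * A) *ᵥ (A⁻¹ *ᵥ x)) :=
    calc star x ⬝ᵥ ((A⁻¹ - 1) *ᵥ x)
        = star x ⬝ᵥ (A⁻¹ *ᵥ x) - star x ⬝ᵥ x := by
          rw [sub_mulVec, dotProduct_sub, one_mulVec]
      _ = (star (A⁻¹ *ᵥ x) ᵥ* A) ⬝ᵥ (A⁻¹ *ᵥ x)
            - (star (A⁻¹ *ᵥ x) ᵥ* A) ⬝ᵥ (A *ᵥ (A⁻¹ *ᵥ x)) := by
          rw [hxy, ← hsx]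
      _ = star (A⁻¹ *ᵥ x) ⬝ᵥ ((A - A * A) *ᵥ (A⁻¹ *ᵥ x)) := by
          conv_lhs => rw [← dotProduct_mulVec, ← dotProduct_mulVec]
          conv_rhs => rw [sub_mulVec, dotProduct_sub, ← mulVec_mulVec]
  rw [e1]
  exact (aux_sub_sq_psd hA.posSemidef h1).dotProduct_mulVec_nonneg _

lemma aux_metric_ge {m n : ℕ} {Z : Matrix (Fin m) (Fin n) ℂ} (hZ : Z ∈ cartanI m n)
    (U : Matrix (Fin m) (Fin n) ℂ) (q : Fin m) (r : Fin n) :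
    ((m + n : ℝ) / 2) * ‖U q r‖^2 ≤ cartanIMetric m n Z U := by
  have hA : ((1 : Matrix (Fin m) (Fin m) ℂ) - Z * Zᴴ).PosDef := hZ
  have hB : ((1 : Matrix (Fin n) (Fin n) ℂ) - Zᴴ * Z).PosDef := aux_swap hA
  set A := (1 : Matrix (Fin m) (Fin m) ℂ) - Z * Zᴴ with hAd
  set B := (1 : Matrix (Fin n) (Fin n) ℂ) - Zᴴ * Z with hBd
  have h1A : ((1 : Matrix (Fin m) (Fin m) ℂ) - A).PosSemidef := by
    rw [hAd, sub_sub_cancel]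
    exact posSemidef_self_mul_conjTranspose Z
  have h1B : ((1 : Matrix (Fin n) (Fin n) ℂ) - B).PosSemidef := by
    rw [hBd, sub_sub_cancel]
    exact posSemidef_conjTranspose_mul_self Z
  have hAinv1 : (A⁻¹ - 1).PosSemidef := aux_inv_sub_one_psd hA h1A
  have hBinv1 : (B⁻¹ - 1).PosSemidef := aux_inv_sub_one_psd hB h1B
  -- step 1
  have step1 : ((U * B⁻¹ * Uᴴ).trace).re ≤ ((A⁻¹ * U * B⁻¹ * Uᴴ).trace).re := by
    have halg : A⁻¹ * U * B⁻¹ * Uᴴ - U * B⁻¹ * Uᴴ = (A⁻¹ - 1) * (U * B⁻¹ * Uᴴ) := by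
      rw [Matrix.sub_mul, Matrix.one_mul]
      simp only [Matrix.mul_assoc]
    have hpsd : (U * B⁻¹ * Uᴴ).PosSemidef := hB.posSemidef.inv.mul_mul_conjTranspose_same U
    have := aux_trace_mul_re_nonneg hAinv1 hpsd
    rw [← halg, Matrix.trace_sub, Complex.sub_re] at this
    linarith
  -- step 2
  have step2 : ((U * Uᴴ).trace).re ≤ ((U * B⁻¹ * Uᴴ).trace).re := by
    have halg : U * B⁻¹ * Uᴴ - U * Uᴴ = U * (B⁻¹ - 1) * Uᴴ := by
      rw [Matrix.mul_sub, Matrix.mul_one, Matrix.sub_mul]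
    have := aux_trace_re_nonneg (hBinv1.mul_mul_conjTranspose_same U)
    rw [← halg, Matrix.trace_sub, Complex.sub_re] at this
    linarith
  -- step 3
  have step3 : ‖U q r‖^2 ≤ ((U * Uᴴ).trace).re := by
    rw [aux_trace_mul_conjTranspose_re]
    exact aux_single_le_double_sum U q r
  have hc : (0:ℝ) ≤ (m + n : ℝ) / 2 := by positivity
  have := mul_le_mul_of_nonneg_left (step3.trans (step2.trans step1)) hc
  exact this

lemma aux_metric_zero (m n : ℕ) (q : Fin m) (r : Fin n) :
    cartanIMetric m n 0 (Matrix.single q r 1) = (m + n : ℝ) / 2 := by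
  have h0 : ((1 : Matrix (Fin m) (Fin m) ℂ) - (0 : Matrix (Fin m) (Fin n) ℂ) *
      (0 : Matrix (Fin m) (Fin n) ℂ)ᴴ)⁻¹ = 1 := by
    rw [Matrix.zero_mul, sub_zero, inv_one]
  have h0' : ((1 : Matrix (Fin n) (Fin n) ℂ) - (0 : Matrix (Fin m) (Fin n) ℂ)ᴴ *
      (0 : Matrix (Fin m) (Fin n) ℂ))⁻¹ = 1 := by
    rw [Matrix.mul_zero, sub_zero, inv_one]
  rw [cartanIMetric, h0, h0', Matrix.one_mul, Matrix.mul_one,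
    aux_trace_mul_conjTranspose_re]
  have : ∑ i, ∑ j, ‖Matrix.single q r (1:ℂ) i j‖^2 = 1 := by
    have he : ∀ (i : Fin m) (j : Fin n), ‖Matrix.single q r (1:ℂ) i j‖^2
        = if q = i then (if r = j then (1:ℝ) else 0) else 0 := by
      intro i j
      by_cases h1 : q = i <;> by_cases h2 : r = j <;>
        simp [Matrix.single, h1, h2]
    simp only [he]
    simp [Finset.sum_ite_eq, Finset.mem_univ]
  rw [this, mul_one]


/-- On the Cartan domain of type I (`m ≥ n ≥ 1`), each coordinate projection
`Z ↦ Z_{qr}` maps the domain into the unit disk and has Bloch seminorm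
`sup_{Z ∈ D} sup_{U ≠ 0} |U_{qr}| / H_Z(U,Ū)^{1/2}` equal to the Bloch constant
`√(2/(m+n))` of the domain. -/
theorem cartanI_projection_blochSemi (m n : ℕ) (hn : 1 ≤ n) (hm : n ≤ m)
    (q : Fin m) (r : Fin n) :
    (∀ Z ∈ cartanI m n, ‖Z q r‖ < 1) ∧
    sSup {t : ℝ | ∃ Z ∈ cartanI m n, ∃ U : Matrix (Fin m) (Fin n) ℂ, U ≠ 0 ∧
        t = ‖U q r‖ / Real.sqrt (cartanIMetric m n Z U)} =
      Real.sqrt (2 / (m + n)) := by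
  have hn' : (1:ℝ) ≤ (n:ℝ) := by exact_mod_cast hn
  have hmn : (0:ℝ) < (m:ℝ) + (n:ℝ) := by
    have := Nat.cast_nonneg (α := ℝ) m
    linarith
  have hc : (0:ℝ) < ((m:ℝ) + (n:ℝ)) / 2 := by linarith
  set s := Real.sqrt (2 / ((m:ℝ) + (n:ℝ))) with hs
  set c := ((m:ℝ) + (n:ℝ)) / 2 with hcd
  have hsc : s * Real.sqrt c = 1 := by
    rw [hs, hcd, ← Real.sqrt_mul (by positivity)]
    rw [show 2 / ((m:ℝ) + (n:ℝ)) * (((m:ℝ) + (n:ℝ)) / 2) = 1 by field_simp]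
    exact Real.sqrt_one
  constructor
  · exact fun Z hZ => aux_coord_lt q r hZ
  · have ub : ∀ t ∈ {t : ℝ | ∃ Z ∈ cartanI m n, ∃ U : Matrix (Fin m) (Fin n) ℂ, U ≠ 0 ∧
        t = ‖U q r‖ / Real.sqrt (cartanIMetric m n Z U)}, t ≤ s := by
      rintro t ⟨Z, hZ, U, hU, rfl⟩
      by_cases h : U q r = 0
      · rw [h, norm_zero, zero_div]
        exact Real.sqrt_nonneg _
      · have hq : 0 < ‖U q r‖ := norm_pos_iff.mpr h
        have hmetric : c * ‖U q r‖^2 ≤ cartanIMetric m n Z U := aux_metric_ge hZ U q r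
        have hMpos : 0 < cartanIMetric m n Z U := lt_of_lt_of_le (by positivity) hmetric
        rw [div_le_iff₀ (Real.sqrt_pos.mpr hMpos)]
        calc ‖U q r‖ = (s * Real.sqrt c) * ‖U q r‖ := by rw [hsc, one_mul]
          _ = s * (Real.sqrt c * ‖U q r‖) := by ring
          _ = s * Real.sqrt (c * ‖U q r‖^2) := by
              rw [Real.sqrt_mul hc.le, Real.sqrt_sq (norm_nonneg _)]
          _ ≤ s * Real.sqrt (cartanIMetric m n Z U) := by
              exact mul_le_mul_of_nonneg_left (Real.sqrt_le_sqrt hmetric) (Real.sqrt_nonneg _)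
    have hmem : s ∈ {t : ℝ | ∃ Z ∈ cartanI m n, ∃ U : Matrix (Fin m) (Fin n) ℂ, U ≠ 0 ∧
        t = ‖U q r‖ / Real.sqrt (cartanIMetric m n Z U)} := by
      refine ⟨0, ?_, Matrix.single q r 1, ?_, ?_⟩
      · show ((1 : Matrix (Fin m) (Fin m) ℂ)
            - (0 : Matrix (Fin m) (Fin n) ℂ) * (0 : Matrix (Fin m) (Fin n) ℂ)ᴴ).PosDef
        rw [Matrix.zero_mul, sub_zero]
        exact Matrix.PosDef.one
      · intro h
        have := congrFun (congrFun h q) r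
        rw [Matrix.single_apply_same] at this
        exact one_ne_zero this
      · rw [aux_metric_zero, Matrix.single_apply_same, norm_one, hs]
        rw [show (2:ℝ) / ((m:ℝ) + (n:ℝ)) = (((m:ℝ) + (n:ℝ)) / 2)⁻¹ by
          rw [inv_div], Real.sqrt_inv, one_div]
    exact le_antisymm (Real.sSup_le ub (Real.sqrt_nonneg _)) (le_csSup ⟨s, ub⟩ hmem)
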